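/- arXiv:2307.01632 — 7 statements merged into one kernel-verified Lean document; each statement's English description precedes it below -/
import Mathlib

section
/- In the majority-imitation model, if the selected agent k changes opinion at time t (which happens only when strictly more of its neighbors hold the new opinion than its current opinion), then Z_{t+1} < Z_t; otherwise Z_{t+1} = Z_t. In particular (Z_t) is nonincreasing in t. -/
open Finset

/-- `Z(x) = Σ_{i≠j} max(1{x i ≠ x j}, 1{(i,j) ∉ E})`, summed over ordered pairs. -/
def Zval {n : ℕ} (G : SimpleGraph (Fin n)) [DecidableRel G.Adj] (x : Fin n → ℤ) : ℕ :=
  ∑ i : Fin n, ∑ j : Fin n,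
    max (if x i ≠ x j then 1 else 0) (if i ≠ j ∧ ¬ G.Adj i j then 1 else 0)

private lemma zkey {n : ℕ} (G : SimpleGraph (Fin n)) [DecidableRel G.Adj]
    (x : Fin n → ℤ) (k : Fin n) :
    Zval G x + 2 * ((G.neighborFinset k).filter (fun m => x m = x k)).card
      = 2 * (Finset.univ.erase k).card
        + ∑ i ∈ Finset.univ.erase k, ∑ j ∈ Finset.univ.erase k,
            max (if x i ≠ x j then 1 else 0) (if i ≠ j ∧ ¬ G.Adj i j then 1 else 0) := by
  set g : Fin n → Fin n → ℕ := fun i j =>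
    max (if x i ≠ x j then 1 else 0) (if i ≠ j ∧ ¬ G.Adj i j then 1 else 0) with hg
  have gsymm : ∀ i j, g i j = g j i := by
    intro i j
    simp only [hg]
    congr 1
    · exact if_congr ne_comm rfl rfl
    · exact if_congr (and_congr ne_comm (not_congr (G.adj_comm i j))) rfl rfl
  have hsplit : ∀ F : Fin n → ℕ, ∑ i, F i = F k + ∑ i ∈ Finset.univ.erase k, F i := by
    intro F
    exact (Finset.add_sum_erase _ F (mem_univ k)).symm
  have hz : Zval G x = g k k + ∑ j ∈ Finset.univ.erase k, g k j
      + (∑ i ∈ Finset.univ.erase k, g i k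
        + ∑ i ∈ Finset.univ.erase k, ∑ j ∈ Finset.univ.erase k, g i j) := by
    show (∑ i, ∑ j, g i j) = _
    rw [hsplit (fun i => ∑ j, g i j), hsplit (fun j => g k j)]
    have hin : ∑ i ∈ Finset.univ.erase k, ∑ j, g i j
        = ∑ i ∈ Finset.univ.erase k, (g i k + ∑ j ∈ Finset.univ.erase k, g i j) :=
      Finset.sum_congr rfl fun i _ => hsplit (fun j => g i j)
    rw [hin, Finset.sum_add_distrib]
  have hgkk : g k k = 0 := by simp [hg]
  have hcol : ∑ i ∈ Finset.univ.erase k, g i k = ∑ j ∈ Finset.univ.erase k, g k j :=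
    Finset.sum_congr rfl fun i _ => gsymm i k
  have hterm : ∀ j ∈ Finset.univ.erase k,
      g k j + (if G.Adj k j ∧ x j = x k then 1 else 0) = 1 := by
    intro j hj
    have hjk : j ≠ k := Finset.ne_of_mem_erase hj
    have hkj : k ≠ j := hjk.symm
    by_cases hAdj : G.Adj k j
    · by_cases hEq : x j = x k
      · simp [hg, hEq, hAdj, hkj]
      · have : x k ≠ x j := fun h => hEq h.symm
        simp [hg, this, hEq, hAdj]
    · have h1 : (if k ≠ j ∧ ¬ G.Adj k j then 1 else 0) = 1 := by
        simp [hkj, hAdj]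
      by_cases hEq : x j = x k
      · have : ¬ (x k ≠ x j) := by simp [hEq.symm]
        simp [hg, this, hEq, hkj, hAdj]
      · have : x k ≠ x j := fun h => hEq h.symm
        simp [hg, this, hEq, hkj, hAdj]
  have hsum1 : ∑ j ∈ Finset.univ.erase k, g k j
      + ∑ j ∈ Finset.univ.erase k, (if G.Adj k j ∧ x j = x k then 1 else 0)
      = (Finset.univ.erase k).card := by
    rw [← Finset.sum_add_distrib]
    rw [Finset.sum_congr rfl hterm]
    simp
  have hfil : ((G.neighborFinset k).filter (fun m => x m = x k)).card
      = ∑ j ∈ Finset.univ.erase k, (if G.Adj k j ∧ x j = x k then 1 else 0) := by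
    have h0 : ((G.neighborFinset k).filter (fun m => x m = x k)).card
        = ∑ j : Fin n, (if G.Adj k j ∧ x j = x k then 1 else 0) := by
      rw [Finset.card_filter]
      rw [SimpleGraph.neighborFinset_eq_filter, Finset.sum_filter]
      refine Finset.sum_congr rfl fun j _ => ?_
      by_cases hAdj : G.Adj k j <;> simp [hAdj]
    rw [h0, hsplit (fun j => if G.Adj k j ∧ x j = x k then 1 else 0)]
    simp
  have hRR : (∑ i ∈ Finset.univ.erase k, ∑ j ∈ Finset.univ.erase k,
      max (if x i ≠ x j then 1 else 0) (if i ≠ j ∧ ¬ G.Adj i j then 1 else 0))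
      = ∑ i ∈ Finset.univ.erase k, ∑ j ∈ Finset.univ.erase k, g i j := rfl
  rw [hz, hgkk, hcol, hfil, hRR]
  omega

theorem stmt1 {n : ℕ} (G : SimpleGraph (Fin n)) [DecidableRel G.Adj] (hconn : G.Connected)
    (X : ℕ → Fin n → ℤ) (ksel jsel : ℕ → Fin n)
    (hx0 : ∀ i, X 0 i = 1 ∨ X 0 i = -1)
    (hadj : ∀ t, G.Adj (ksel t) (jsel t))
    (hupd : ∀ t i, X (t + 1) i =
      if i = ksel t ∧
          ((G.neighborFinset (ksel t)).filter (fun m => X t m = X t (jsel t))).card >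
            ((G.neighborFinset (ksel t)).filter (fun m => X t m = X t (ksel t))).card
        then X t (jsel t) else X t i) :
    (∀ t, (X (t + 1) (ksel t) ≠ X t (ksel t) → Zval G (X (t + 1)) < Zval G (X t)) ∧
          (X (t + 1) (ksel t) = X t (ksel t) → Zval G (X (t + 1)) = Zval G (X t))) ∧
    Antitone (fun t => Zval G (X t)) := by
  have hmain : ∀ t, (X (t + 1) (ksel t) ≠ X t (ksel t) → Zval G (X (t + 1)) < Zval G (X t)) ∧
      (X (t + 1) (ksel t) = X t (ksel t) → Zval G (X (t + 1)) = Zval G (X t)) := by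
    intro t
    set k := ksel t with hk
    have hother : ∀ j, j ≠ k → X (t + 1) j = X t j := by
      intro j hj
      rw [hupd t j, if_neg]
      intro h
      exact hj h.1
    constructor
    · intro hne
      have hcond : ((G.neighborFinset k).filter (fun m => X t m = X t (jsel t))).card >
          ((G.neighborFinset k).filter (fun m => X t m = X t k)).card := by
        by_contra hc
        apply hne
        rw [hupd t k, if_neg]
        intro h
        exact hc h.2
      have hyk : X (t + 1) k = X t (jsel t) := by
        rw [hupd t k, if_pos ⟨rfl, hcond⟩]
      have h1 := zkey G (X t) k
      have h2 := zkey G (X (t + 1)) k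
      have hR : (∑ i ∈ Finset.univ.erase k, ∑ j ∈ Finset.univ.erase k,
            max (if X (t+1) i ≠ X (t+1) j then 1 else 0) (if i ≠ j ∧ ¬ G.Adj i j then 1 else 0))
          = ∑ i ∈ Finset.univ.erase k, ∑ j ∈ Finset.univ.erase k,
            max (if X t i ≠ X t j then 1 else 0) (if i ≠ j ∧ ¬ G.Adj i j then 1 else 0) := by
        refine Finset.sum_congr rfl fun i hi => Finset.sum_congr rfl fun j hj => ?_
        rw [hother i (Finset.ne_of_mem_erase hi), hother j (Finset.ne_of_mem_erase hj)]
      have hC : ((G.neighborFinset k).filter (fun m => X (t+1) m = X (t+1) k)).card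
          = ((G.neighborFinset k).filter (fun m => X t m = X t (jsel t))).card := by
        congr 1
        refine Finset.filter_congr fun m hm => ?_
        have hmk : m ≠ k := (G.ne_of_adj (by simpa using hm)).symm
        rw [hother m hmk, hyk]
      rw [hR] at h2
      rw [hC] at h2
      omega
    · intro heq
      have hXeq : X (t + 1) = X t := by
        funext j
        by_cases hj : j = k
        · rw [hj]; exact heq
        · exact hother j hj
      rw [hXeq]
  refine ⟨hmain, ?_⟩
  apply antitone_nat_of_succ_le
  intro t
  by_cases h : X (t + 1) (ksel t) = X t (ksel t)
  · exact le_of_eq ((hmain t).2 h)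
  · exact le_of_lt ((hmain t).1 h)
end

section
/- Let G be a cycle or path on n ≥ 4 vertices. If four consecutive vertices a,b,c,d (a path a–b–c–d in G) initially have opinions 1, 1, −1, −1, then under any sequence of majority-imitation updates, the opinions of a, b, c, d never change. In particular consensus is never reached. -/
open Finset

lemma no_flip_aux {n : ℕ} (G : SimpleGraph (Fin n)) [DecidableRel G.Adj]
    (Y : Fin n → ℤ) (k j m : Fin n)
    (hdeg : (G.neighborFinset k).card ≤ 2) (hm : G.Adj k m) (hxm : Y m = Y k) :
    ¬ (((G.neighborFinset k).filter (fun v => Y v = Y j)).card >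
        ((G.neighborFinset k).filter (fun v => Y v = Y k)).card) := by
  intro h
  by_cases hjk : Y j = Y k
  · simp only [hjk] at h
    exact lt_irrefl _ h
  · have hm1 : m ∈ (G.neighborFinset k).filter (fun v => Y v = Y k) := by
      simp [SimpleGraph.mem_neighborFinset, hm, hxm]
    have h1 : 1 ≤ ((G.neighborFinset k).filter (fun v => Y v = Y k)).card :=
      Finset.card_pos.mpr ⟨m, hm1⟩
    have hdisj : Disjoint ((G.neighborFinset k).filter (fun v => Y v = Y j))
        ((G.neighborFinset k).filter (fun v => Y v = Y k)) := by
      apply Finset.disjoint_filter_filter'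
      intro p hp1 hp2 x hx
      exact absurd ((hp2 x hx).symm.trans (hp1 x hx)) (fun e => hjk e.symm)
    have hsum := Finset.card_union_of_disjoint hdisj
    have hsub : ((G.neighborFinset k).filter (fun v => Y v = Y j)) ∪
        ((G.neighborFinset k).filter (fun v => Y v = Y k)) ⊆ G.neighborFinset k := by
      apply Finset.union_subset <;> exact Finset.filter_subset _ _
    have := Finset.card_le_card hsub
    omega

theorem stmt5 {n : ℕ} (hn : 4 ≤ n) (G : SimpleGraph (Fin n)) [DecidableRel G.Adj]
    (hG : G = SimpleGraph.cycleGraph n ∨ G = SimpleGraph.pathGraph n)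
    (a b c d : Fin n)
    (hab : G.Adj a b) (hbc : G.Adj b c) (hcd : G.Adj c d)
    (hac : a ≠ c) (had : a ≠ d) (hbd : b ≠ d)
    (X : ℕ → Fin n → ℤ) (ksel jsel : ℕ → Fin n)
    (hadj : ∀ t, G.Adj (ksel t) (jsel t))
    (hupd : ∀ t i, X (t + 1) i =
      if i = ksel t ∧
          ((G.neighborFinset (ksel t)).filter (fun m => X t m = X t (jsel t))).card >
            ((G.neighborFinset (ksel t)).filter (fun m => X t m = X t (ksel t))).card
        then X t (jsel t) else X t i)
    (ha : X 0 a = 1) (hb : X 0 b = 1) (hc : X 0 c = -1) (hd : X 0 d = -1) :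
    (∀ t, X t a = 1 ∧ X t b = 1 ∧ X t c = -1 ∧ X t d = -1) ∧
    ¬ ∃ t, ∀ i j : Fin n, X t i = X t j := by
  -- degree bound
  obtain ⟨m, rfl⟩ : ∃ m, n = m + 2 := ⟨n - 2, by omega⟩
  have hdeg : ∀ v : Fin (m + 2), (G.neighborFinset v).card ≤ 2 := by
    intro v
    have hsub : G.neighborFinset v ⊆ {v - 1, v + 1} := by
      intro w hw
      rw [SimpleGraph.mem_neighborFinset] at hw
      have hcyc : (SimpleGraph.cycleGraph (m + 2)).Adj v w := by
        rcases hG with h | h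
        · rwa [h] at hw
        · rw [h] at hw
          exact SimpleGraph.pathGraph_le_cycleGraph hw
      rw [SimpleGraph.cycleGraph_adj] at hcyc
      simp only [Finset.mem_insert, Finset.mem_singleton]
      rcases hcyc with h | h
      · left; open Fin.CommRing in linear_combination -h
      · right; open Fin.CommRing in linear_combination h
    have h2 : ({v - 1, v + 1} : Finset (Fin (m + 2))).card ≤ 2 :=
      (Finset.card_insert_le _ _).trans (by simp)
    exact (Finset.card_le_card hsub).trans h2
  -- invariant
  have hinv : ∀ t, X t a = 1 ∧ X t b = 1 ∧ X t c = -1 ∧ X t d = -1 := by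
    intro t
    induction t with
    | zero => exact ⟨ha, hb, hc, hd⟩
    | succ t ih =>
      obtain ⟨iha, ihb, ihc, ihd⟩ := ih
      have step : ∀ (i nb : Fin (m + 2)), G.Adj i nb → X t nb = X t i →
          X (t + 1) i = X t i := by
        intro i nb hadji hx
        rw [hupd]
        split_ifs with h
        · obtain ⟨hk, hcond⟩ := h
          rw [← hk] at hcond
          exact absurd hcond (no_flip_aux G (X t) i (jsel t) nb (hdeg i) hadji hx)
        · rfl
      refine ⟨?_, ?_, ?_, ?_⟩
      · rw [step a b hab (ihb.trans iha.symm)]; exact iha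
      · rw [step b a hab.symm (iha.trans ihb.symm)]; exact ihb
      · rw [step c d hcd (ihd.trans ihc.symm)]; exact ihc
      · rw [step d c hcd.symm (ihc.trans ihd.symm)]; exact ihd
  refine ⟨hinv, ?_⟩
  rintro ⟨t, hcons⟩
  have := hcons a c
  rw [(hinv t).1, (hinv t).2.2.1] at this
  norm_num at this
end

section
/- Let G = ([n],E) be any connected graph containing a path a–b–c–d where a, b, c, d all have degree at most 2 in G and initial opinions 1, 1, −1, −1 respectively. Then under any sequence of majority-imitation updates, vertices a, b, c, d never change opinion, so consensus is never achieved. -/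
open Finset

lemma stable_aux {n : ℕ} (G : SimpleGraph (Fin n)) [DecidableRel G.Adj]
    (v w : Fin n) (hvw : G.Adj v w) (hdeg : G.degree v ≤ 2)
    (Y : Fin n → ℤ) (hw : Y w = Y v) (s : ℤ) :
    ¬ (((G.neighborFinset v).filter (fun m => Y m = s)).card >
       ((G.neighborFinset v).filter (fun m => Y m = Y v)).card) := by
  intro h
  have hwmem : w ∈ (G.neighborFinset v).filter (fun m => Y m = Y v) := by
    simp [SimpleGraph.mem_neighborFinset, hvw, hw]
  have h1 : 0 < ((G.neighborFinset v).filter (fun m => Y m = Y v)).card :=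
    Finset.card_pos.mpr ⟨w, hwmem⟩
  by_cases hs : s = Y v
  · subst hs; exact lt_irrefl _ h
  · have hdisj : Disjoint ((G.neighborFinset v).filter (fun m => Y m = s))
        ((G.neighborFinset v).filter (fun m => Y m = Y v)) := by
      rw [Finset.disjoint_left]
      intro x hx1 hx2
      rw [Finset.mem_filter] at hx1 hx2
      exact hs (hx1.2 ▸ hx2.2)
    have hsum : ((G.neighborFinset v).filter (fun m => Y m = s)).card +
        ((G.neighborFinset v).filter (fun m => Y m = Y v)).card ≤ 2 := by
      have := Finset.card_union_of_disjoint hdisj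
      have hsub : ((G.neighborFinset v).filter (fun m => Y m = s)) ∪
          ((G.neighborFinset v).filter (fun m => Y m = Y v)) ⊆ G.neighborFinset v :=
        Finset.union_subset (Finset.filter_subset _ _) (Finset.filter_subset _ _)
      have := Finset.card_le_card hsub
      rw [Finset.card_union_of_disjoint hdisj] at this
      calc _ ≤ (G.neighborFinset v).card := this
        _ = G.degree v := (G.card_neighborFinset_eq_degree v)
        _ ≤ 2 := hdeg
    omega

theorem stmt7 {n : ℕ} (G : SimpleGraph (Fin n)) [DecidableRel G.Adj] (hconn : G.Connected)
    (a b c d : Fin n)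
    (hab : G.Adj a b) (hbc : G.Adj b c) (hcd : G.Adj c d)
    (hac : a ≠ c) (had : a ≠ d) (hbd : b ≠ d)
    (hdega : G.degree a ≤ 2) (hdegb : G.degree b ≤ 2)
    (hdegc : G.degree c ≤ 2) (hdegd : G.degree d ≤ 2)
    (X : ℕ → Fin n → ℤ) (ksel jsel : ℕ → Fin n)
    (hadj : ∀ t, G.Adj (ksel t) (jsel t))
    (hupd : ∀ t i, X (t + 1) i =
      if i = ksel t ∧
          ((G.neighborFinset (ksel t)).filter (fun m => X t m = X t (jsel t))).card >
            ((G.neighborFinset (ksel t)).filter (fun m => X t m = X t (ksel t))).card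
        then X t (jsel t) else X t i)
    (ha : X 0 a = 1) (hb : X 0 b = 1) (hc : X 0 c = -1) (hd : X 0 d = -1) :
    (∀ t, X t a = 1 ∧ X t b = 1 ∧ X t c = -1 ∧ X t d = -1) ∧
    ¬ ∃ t, ∀ i j : Fin n, X t i = X t j := by
  have key : ∀ t, X t a = 1 ∧ X t b = 1 ∧ X t c = -1 ∧ X t d = -1 := by
    intro t
    induction t with
    | zero => exact ⟨ha, hb, hc, hd⟩
    | succ t ih =>
      obtain ⟨ia, ib, ic, id⟩ := ih
      have step : ∀ v w : Fin n, G.Adj v w → G.degree v ≤ 2 → X t w = X t v →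
          X (t + 1) v = X t v := by
        intro v w hvw hdeg hweq
        rw [hupd t v]
        split
        · rename_i hcond
          obtain ⟨hk, hgt⟩ := hcond
          subst hk
          exact absurd hgt (stable_aux G (ksel t) w hvw hdeg (X t) hweq _)
        · rfl
      have sa : X (t+1) a = X t a := step a b hab hdega (by rw [ia, ib])
      have sb : X (t+1) b = X t b := step b a hab.symm hdegb (by rw [ia, ib])
      have sc : X (t+1) c = X t c := step c d hcd hdegc (by rw [ic, id])
      have sd : X (t+1) d = X t d := step d c hcd.symm hdegd (by rw [ic, id])
      exact ⟨sa ▸ ia, sb ▸ ib, sc ▸ ic, sd ▸ id⟩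
  refine ⟨key, ?_⟩
  rintro ⟨t, hcons⟩
  obtain ⟨_, ib, ic, _⟩ := key t
  have := hcons b c
  rw [ib, ic] at this
  norm_num at this
end

section
/- Let G = ([n],E) be connected and suppose initial opinions x_i(0) are i.i.d. with P(x_i(0)=1)=p, and the dynamics are majority-imitation with the selected vertex and neighbor chosen so that every (vertex, neighbor) pair is selected infinitely often almost surely. Then the probability of eventual consensus satisfies P(consensus) ≥ 1 − 2p(1−p)|E|. -/
open Finset MeasureTheory ProbabilityTheory

theorem stmt8 {n : ℕ} (G : SimpleGraph (Fin n)) [DecidableRel G.Adj] (hconn : G.Connected)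
    {Ω : Type*} [MeasureSpace Ω] [IsProbabilityMeasure (ℙ : Measure Ω)]
    (X : ℕ → Ω → Fin n → ℤ) (ksel jsel : ℕ → Ω → Fin n)
    (p : ℝ) (hp0 : 0 ≤ p) (hp1 : p ≤ 1)
    -- initial opinions are i.i.d. ±1-valued with P(x_i(0) = 1) = p
    (hmeas : ∀ i, Measurable (fun ω => X 0 ω i))
    (hpm : ∀ ω i, X 0 ω i = 1 ∨ X 0 ω i = -1)
    (hindep : iIndepFun (fun i ω => X 0 ω i) ℙ)
    (hdist : ∀ i, (ℙ {ω | X 0 ω i = 1} : ENNReal) = ENNReal.ofReal p)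
    -- majority-imitation dynamics
    (hadj : ∀ t ω, G.Adj (ksel t ω) (jsel t ω))
    (hupd : ∀ t ω i, X (t + 1) ω i =
      if i = ksel t ω ∧
          ((G.neighborFinset (ksel t ω)).filter (fun m => X t ω m = X t ω (jsel t ω))).card >
            ((G.neighborFinset (ksel t ω)).filter (fun m => X t ω m = X t ω (ksel t ω))).card
        then X t ω (jsel t ω) else X t ω i)
    -- every (vertex, neighbor) pair is selected infinitely often almost surely
    (hio : ∀ᵐ ω ∂ℙ, ∀ v w : Fin n, G.Adj v w → ∀ N : ℕ, ∃ t, N ≤ t ∧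
      ksel t ω = v ∧ jsel t ω = w) :
    (ℙ {ω | ∃ T, ∀ t, T ≤ t → ∀ i j : Fin n, X t ω i = X t ω j} : ENNReal)
      ≥ ENNReal.ofReal (1 - 2 * p * (1 - p) * G.edgeFinset.card) := by
  classical
  set S : Set Ω := {ω | ∃ T, ∀ t, T ≤ t → ∀ i j : Fin n, X t ω i = X t ω j}
  set A : Set Ω := {ω | ∀ i j : Fin n, G.Adj i j → X 0 ω i = X 0 ω j} with hA
  -- A ⊆ S
  have hAS : A ⊆ S := by
    intro ω hω
    -- agreement at time 0 for all vertices
    have h0 : ∀ i j : Fin n, X 0 ω i = X 0 ω j := by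
      intro i j
      obtain ⟨w⟩ := hconn.preconnected i j
      induction w with
      | nil => rfl
      | cons h _ ih => exact (hω _ _ h).trans ih
    have hall : ∀ t, ∀ i j : Fin n, X t ω i = X t ω j := by
      intro t
      induction t with
      | zero => exact h0
      | succ t ih =>
        have hstep : ∀ i, X (t + 1) ω i = X t ω i := by
          intro i
          rw [hupd]
          split
          · exact ih _ _
          · rfl
        intro i j
        rw [hstep, hstep]
        exact ih i j
    exact ⟨0, fun t _ => hall t⟩
  -- the bad ordered pairs
  set P : Finset (Fin n × Fin n) := Finset.univ.filter fun q => G.Adj q.1 q.2 with hP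
  set B : Fin n × Fin n → Set Ω := fun q => {ω | X 0 ω q.1 = 1 ∧ X 0 ω q.2 = -1} with hB
  have hAc : Aᶜ ⊆ ⋃ q ∈ P, B q := by
    intro ω hω
    simp only [hA, Set.mem_compl_iff, Set.mem_setOf_eq, not_forall] at hω
    obtain ⟨i, j, hij, hne⟩ := hω
    rcases hpm ω i with hi | hi
    · have hj : X 0 ω j = -1 := by
        rcases hpm ω j with hj | hj
        · exact absurd (hi.trans hj.symm) hne
        · exact hj
      exact Set.mem_biUnion (Finset.mem_filter.mpr ⟨Finset.mem_univ _, hij⟩) (⟨hi, hj⟩ : ω ∈ B (i, j))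
    · have hj : X 0 ω j = 1 := by
        rcases hpm ω j with hj | hj
        · exact hj
        · exact absurd (hi.trans hj.symm) hne
      exact Set.mem_biUnion (Finset.mem_filter.mpr ⟨Finset.mem_univ _, hij.symm⟩) (⟨hj, hi⟩ : ω ∈ B (j, i))
  -- probability of X 0 · i = -1
  have hneg : ∀ i : Fin n, (ℙ {ω | X 0 ω i = -1} : ENNReal) = ENNReal.ofReal (1 - p) := by
    intro i
    have hdisj : Disjoint {ω | X 0 ω i = 1} {ω | X 0 ω i = -1} := by
      rw [Set.disjoint_left]
      intro ω h1 h2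
      simp only [Set.mem_setOf_eq] at h1 h2
      rw [h1] at h2; norm_num at h2
    have hunion : {ω | X 0 ω i = 1} ∪ {ω | X 0 ω i = -1} = Set.univ := by
      ext ω; simp only [Set.mem_union, Set.mem_setOf_eq, Set.mem_univ, iff_true]
      exact hpm ω i
    have hm1 : MeasurableSet {ω | X 0 ω i = -1} := (hmeas i) (measurableSet_singleton (-1))
    have := measure_union (μ := (ℙ : Measure Ω)) hdisj hm1
    rw [hunion, measure_univ, hdist i] at this
    have h1p : ENNReal.ofReal p + ENNReal.ofReal (1 - p) = 1 := by
      rw [← ENNReal.ofReal_add hp0 (by linarith), ← ENNReal.ofReal_one]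
      norm_num
    have := this.symm
    rw [← h1p] at this
    exact (ENNReal.add_right_inj (by simp [ENNReal.ofReal_lt_top.ne])).mp this
  -- probability of each B q
  have hBq : ∀ q ∈ P, (ℙ (B q) : ENNReal) = ENNReal.ofReal (p * (1 - p)) := by
    intro q hq
    simp only [hP, Finset.mem_filter] at hq
    have hne : q.1 ≠ q.2 := hq.2.ne
    have hind := hindep.indepFun hne
    have : B q = (fun ω => X 0 ω q.1) ⁻¹' {1} ∩ (fun ω => X 0 ω q.2) ⁻¹' {-1} := by
      ext ω; simp [hB, Set.mem_setOf_eq]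
    rw [this, hind.measure_inter_preimage_eq_mul _ _ (measurableSet_singleton 1)
      (measurableSet_singleton (-1))]
    have e1 : (fun ω => X 0 ω q.1) ⁻¹' {1} = {ω | X 0 ω q.1 = 1} := by ext ω; simp
    have e2 : (fun ω => X 0 ω q.2) ⁻¹' {-1} = {ω | X 0 ω q.2 = -1} := by ext ω; simp
    rw [e1, e2, hdist, hneg, ← ENNReal.ofReal_mul hp0]
  -- card of P
  have hcard : P.card = 2 * G.edgeFinset.card := by
    rw [hP, SimpleGraph.two_mul_card_edgeFinset]
  -- union bound
  have hbound : (ℙ Aᶜ : ENNReal) ≤ ENNReal.ofReal (2 * p * (1 - p) * G.edgeFinset.card) := by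
    calc (ℙ Aᶜ : ENNReal) ≤ ℙ (⋃ q ∈ P, B q) := measure_mono hAc
      _ ≤ ∑ q ∈ P, ℙ (B q) := measure_biUnion_finset_le P B
      _ = ∑ q ∈ P, ENNReal.ofReal (p * (1 - p)) := Finset.sum_congr rfl hBq
      _ = P.card * ENNReal.ofReal (p * (1 - p)) := by
          rw [Finset.sum_const, nsmul_eq_mul]
      _ = ENNReal.ofReal (2 * p * (1 - p) * G.edgeFinset.card) := by
          rw [hcard, ← ENNReal.ofReal_natCast (2 * G.edgeFinset.card),
            ← ENNReal.ofReal_mul (Nat.cast_nonneg _)]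
          congr 1
          push_cast
          ring
  -- conclude
  have h1 : (1 : ENNReal) ≤ ℙ A + ℙ Aᶜ := by
    have := measure_union_le (μ := (ℙ : Measure Ω)) A Aᶜ
    rw [Set.union_compl_self, measure_univ] at this
    exact this
  have hkey : ENNReal.ofReal (1 - 2 * p * (1 - p) * G.edgeFinset.card)
      = 1 - ENNReal.ofReal (2 * p * (1 - p) * G.edgeFinset.card) := by
    have hnn : (0:ℝ) ≤ 2 * p * (1 - p) * G.edgeFinset.card :=
      mul_nonneg (mul_nonneg (by linarith) (by linarith)) (Nat.cast_nonneg _)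
    rw [ENNReal.ofReal_sub _ hnn, ENNReal.ofReal_one]
  rw [ge_iff_le, hkey, tsub_le_iff_right]
  calc (1 : ENNReal) ≤ ℙ A + ℙ Aᶜ := h1
    _ ≤ ℙ S + ENNReal.ofReal (2 * p * (1 - p) * G.edgeFinset.card) :=
        add_le_add (measure_mono hAS) hbound
end

section
/- Under the majority-imitation dynamics on a finite connected graph, the opinions converge in finite time almost surely: there exists an a.s. finite random time T such that x_i(t) = x_i(T) for all i ∈ [n] and all t ≥ T. -/
open Finset MeasureTheory ProbabilityTheory

section aux
variable {n : ℕ} (G : SimpleGraph (Fin n)) [DecidableRel G.Adj]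

def myEnergy (x : Fin n → ℤ) : ℤ :=
  ∑ v, ∑ m ∈ G.neighborFinset v, -(x v * x m)

lemma myEnergy_lb (x : Fin n → ℤ) (hx : ∀ i, x i = 1 ∨ x i = -1) :
    -(n * n : ℤ) ≤ myEnergy G x := by
  have h1 : ∀ v : Fin n, -(n : ℤ) ≤ ∑ m ∈ G.neighborFinset v, -(x v * x m) := by
    intro v
    have hterm : ∀ m ∈ G.neighborFinset v, (-1 : ℤ) ≤ -(x v * x m) := by
      intro m _
      rcases hx v with h | h <;> rcases hx m with h' | h' <;> rw [h, h'] <;> norm_num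
    have hcard : (G.neighborFinset v).card ≤ n := by
      simpa using Finset.card_le_univ (G.neighborFinset v)
    calc -(n : ℤ) ≤ (G.neighborFinset v).card • (-1 : ℤ) := by
            simp only [smul_neg, nsmul_eq_mul, mul_one]
            exact neg_le_neg (by exact_mod_cast hcard)
      _ ≤ ∑ m ∈ G.neighborFinset v, -(x v * x m) := Finset.card_nsmul_le_sum _ _ _ hterm
  calc -(n * n : ℤ) = ∑ _v : Fin n, -(n : ℤ) := by
        simp [Finset.sum_const, nsmul_eq_mul]
    _ ≤ myEnergy G x := Finset.sum_le_sum (fun v _ => h1 v)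

lemma myEnergy_update (x : Fin n → ℤ) (hx : ∀ i, x i = 1 ∨ x i = -1)
    (v w : Fin n) (hvw : G.Adj v w)
    (hc : ((G.neighborFinset v).filter (fun m => x m = x v)).card <
          ((G.neighborFinset v).filter (fun m => x m = x w)).card) :
    myEnergy G (fun i => if i = v then x w else x i) < myEnergy G x := by
  set a := x v with ha
  set b := x w with hb
  have hab : a ≠ b := by
    intro h
    rw [h] at hc
    exact lt_irrefl _ hc
  have hcase : (a = 1 ∧ b = -1) ∨ (a = -1 ∧ b = 1) := by
    rcases hx v with h | h <;> rcases hx w with h' | h' <;>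
      simp_all [ha, hb]
  set x' : Fin n → ℤ := fun i => if i = v then b else x i with hx'
  set S : ℤ := ∑ m ∈ G.neighborFinset v, x m with hS
  -- difference computation
  have hdiff : myEnergy G x' - myEnergy G x = 2 * ((a - b) * S) := by
    rw [myEnergy, myEnergy, ← Finset.sum_sub_distrib]
    have hsplit : ∀ v' : Fin n,
        (∑ m ∈ G.neighborFinset v', -(x' v' * x' m)) - ∑ m ∈ G.neighborFinset v', -(x v' * x m)
        = ∑ m ∈ G.neighborFinset v', (x v' * x m - x' v' * x' m) := by
      intro v'
      rw [← Finset.sum_sub_distrib]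
      apply Finset.sum_congr rfl
      intro m _
      ring
    simp_rw [hsplit]
    rw [← Finset.add_sum_erase _ _ (Finset.mem_univ v)]
    have hAt : ∑ m ∈ G.neighborFinset v, (x v * x m - x' v * x' m) = (a - b) * S := by
      rw [hS, Finset.mul_sum]
      apply Finset.sum_congr rfl
      intro m hm
      have hmv : m ≠ v := fun h => (G.notMem_neighborFinset_self v) (h ▸ hm)
      simp only [hx', if_pos rfl, if_neg hmv, ← ha]
      ring
    have hRest : ∑ v' ∈ Finset.univ.erase v, (∑ m ∈ G.neighborFinset v', (x v' * x m - x' v' * x' m))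
        = (a - b) * S := by
      have hinner : ∀ v' ∈ Finset.univ.erase v,
          (∑ m ∈ G.neighborFinset v', (x v' * x m - x' v' * x' m))
          = if v' ∈ G.neighborFinset v then x v' * (a - b) else 0 := by
        intro v' hv'
        have hv'v : v' ≠ v := Finset.ne_of_mem_erase hv'
        have : ∀ m ∈ G.neighborFinset v', (x v' * x m - x' v' * x' m)
            = if m = v then x v' * (a - b) else 0 := by
          intro m _
          simp only [hx', if_neg hv'v]
          by_cases hm : m = v
          · rw [if_pos hm, if_pos hm, hm, ← ha]
            ring
          · rw [if_neg hm, if_neg hm]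
            ring
        rw [Finset.sum_congr rfl this, Finset.sum_ite_eq' (G.neighborFinset v') v
          (fun _ => x v' * (a - b))]
        congr 1
        simp [SimpleGraph.mem_neighborFinset, SimpleGraph.adj_comm]
      rw [Finset.sum_congr rfl hinner, Finset.sum_ite_mem]
      have hint : Finset.univ.erase v ∩ G.neighborFinset v = G.neighborFinset v := by
        ext m
        simp only [Finset.mem_inter, Finset.mem_erase, Finset.mem_univ, and_true, true_and]
        constructor
        · exact fun h => h.2
        · intro h
          exact ⟨fun heq => (G.notMem_neighborFinset_self v) (heq ▸ h), h⟩
      rw [hint, hS, Finset.mul_sum]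
      apply Finset.sum_congr rfl
      intro m _
      ring
    rw [hAt, hRest]
    ring
  -- compute S
  set P := (G.neighborFinset v).filter (fun m => x m = b) with hP
  set Q := (G.neighborFinset v).filter (fun m => x m = a) with hQ
  have hSval : S = b * P.card + a * Q.card := by
    rw [hS, ← Finset.sum_filter_add_sum_filter_not (G.neighborFinset v) (fun m => x m = b)]
    have h1 : ∑ m ∈ (G.neighborFinset v).filter (fun m => x m = b), x m = b * P.card := by
      rw [hP, Finset.sum_congr rfl (fun m hm => (Finset.mem_filter.mp hm).2)]
      simp [mul_comm]
    have h2 : (G.neighborFinset v).filter (fun m => ¬ x m = b) = Q := by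
      rw [hQ]
      apply Finset.filter_congr
      intro m _
      rcases hcase with ⟨h1', h2'⟩ | ⟨h1', h2'⟩ <;> rcases hx m with h | h <;>
        simp [h, h1', h2']
    have h3 : ∑ m ∈ (G.neighborFinset v).filter (fun m => ¬ x m = b), x m = a * Q.card := by
      rw [h2, Finset.sum_congr rfl (fun m hm => (Finset.mem_filter.mp hm).2)]
      simp [mul_comm, hQ]
    rw [h1, h3]
  have hc' : (Q.card : ℤ) < (P.card : ℤ) := by exact_mod_cast hc
  have : myEnergy G x' - myEnergy G x < 0 := by
    rw [hdiff, hSval]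
    rcases hcase with ⟨h1', h2'⟩ | ⟨h1', h2'⟩ <;> rw [h1', h2'] <;> nlinarith
  linarith

end aux

theorem stmt9 {n : ℕ} (G : SimpleGraph (Fin n)) [DecidableRel G.Adj] (hconn : G.Connected)
    {Ω : Type*} [MeasureSpace Ω] [IsProbabilityMeasure (ℙ : Measure Ω)]
    (X : ℕ → Ω → Fin n → ℤ) (sel : ℕ → Ω → Fin n × Fin n)
    (hpm : ∀ ω i, X 0 ω i = 1 ∨ X 0 ω i = -1)
    -- at each step, a uniformly random vertex and a uniformly random neighbor of it
    -- are selected, independently over time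
    (hselmeas : ∀ t, Measurable (sel t))
    (hselindep : iIndepFun
      sel ℙ)
    (hadj : ∀ t ω, G.Adj (sel t ω).1 (sel t ω).2)
    (hunif : ∀ t (v w : Fin n), G.Adj v w →
      (ℙ {ω | sel t ω = (v, w)} : ENNReal)
        = ENNReal.ofReal (1 / (n * G.degree v)))
    -- majority-imitation update rule
    (hupd : ∀ t ω i, X (t + 1) ω i =
      if i = (sel t ω).1 ∧
          ((G.neighborFinset (sel t ω).1).filter
              (fun m => X t ω m = X t ω (sel t ω).2)).card >
            ((G.neighborFinset (sel t ω).1).filter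
              (fun m => X t ω m = X t ω (sel t ω).1)).card
        then X t ω (sel t ω).2 else X t ω i) :
    ∀ᵐ ω ∂ℙ, ∃ T, ∀ t, T ≤ t → ∀ i : Fin n, X t ω i = X T ω i := by
  refine MeasureTheory.ae_of_all _ (fun ω => ?_)
  -- opinions stay ±1 forever
  have hpm' : ∀ t i, X t ω i = 1 ∨ X t ω i = -1 := by
    intro t
    induction t with
    | zero => exact hpm ω
    | succ t ih =>
      intro i
      rw [hupd]
      split
      · exact ih _
      · exact ih i
  -- each step either keeps the configuration or strictly decreases the energy
  have hstep : ∀ t, X (t+1) ω = X t ω ∨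
      myEnergy G (X (t+1) ω) < myEnergy G (X t ω) := by
    intro t
    by_cases h : ((G.neighborFinset (sel t ω).1).filter
          (fun m => X t ω m = X t ω (sel t ω).1)).card <
        ((G.neighborFinset (sel t ω).1).filter
          (fun m => X t ω m = X t ω (sel t ω).2)).card
    · right
      have hform : X (t+1) ω
          = fun i => if i = (sel t ω).1 then X t ω (sel t ω).2 else X t ω i := by
        funext i
        rw [hupd]
        by_cases hi : i = (sel t ω).1
        · rw [if_pos ⟨hi, h⟩, if_pos hi]
        · rw [if_neg (fun hc => hi hc.1), if_neg hi]
      rw [hform]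
      exact myEnergy_update G (X t ω) (hpm' t) _ _ (hadj t ω) h
    · left
      funext i
      rw [hupd, if_neg (fun hc => h hc.2)]
  set E : ℕ → ℤ := fun t => myEnergy G (X t ω) with hE
  have hsucc : ∀ t, E (t+1) ≤ E t := by
    intro t
    rcases hstep t with h | h
    · exact le_of_eq (by simp only [hE, h])
    · exact le_of_lt h
  have hanti : ∀ s t, s ≤ t → E t ≤ E s := by
    intro s t hst
    induction hst with
    | refl => exact le_refl _
    | step h ih => exact le_trans (hsucc _) ih
  have hlb : ∀ t, 0 ≤ E t + (n * n : ℤ) := by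
    intro t
    have := myEnergy_lb G (X t ω) (hpm' t)
    simp only [hE]
    linarith
  set d : ℕ → ℕ := fun t => (E t + (n * n : ℤ)).toNat with hd
  have hdanti : ∀ s t, s ≤ t → d t ≤ d s := by
    intro s t hst
    exact Int.toNat_le_toNat (add_le_add_left (hanti s t hst) _)
  obtain ⟨T, hT⟩ := Nat.sInf_mem (Set.range_nonempty d)
  have hdT : ∀ t, T ≤ t → d t = d T := by
    intro t ht
    exact le_antisymm (hdanti T t ht) (hT ▸ Nat.sInf_le ⟨t, rfl⟩)
  have hET : ∀ t, T ≤ t → E t = E T := by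
    intro t ht
    have h1 := hdT t ht
    have h2 : E t + (n*n : ℤ) = E T + (n*n : ℤ) := by
      rw [← Int.toNat_of_nonneg (hlb t), ← Int.toNat_of_nonneg (hlb T)]
      exact_mod_cast h1
    linarith
  have hXconst : ∀ t, T ≤ t → X t ω = X T ω := by
    intro t ht
    induction t with
    | zero =>
      have : T = 0 := Nat.le_zero.mp ht
      rw [this]
    | succ t ih =>
      rcases eq_or_lt_of_le ht with h | h
      · rw [← h]
      · have ht' : T ≤ t := Nat.lt_succ_iff.mp h
        rcases hstep t with heq | hlt
        · rw [heq]
          exact ih ht'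
        · exfalso
          have e1 := hET (t+1) ht
          have e2 := hET t ht'
          simp only [hE] at e1 e2
          rw [e1, e2] at hlt
          exact lt_irrefl _ hlt
  exact ⟨T, fun t ht i => by rw [hXconst t ht]⟩
end

section
/- On the complete graph K_n, majority-imitation dynamics with uniformly random selection reaches consensus almost surely. -/
open Finset MeasureTheory ProbabilityTheory

namespace Stmt13


variable {n : ℕ}

/-- one update step of majority imitation on the complete graph -/
def step (x : Fin n → ℤ) (p : Fin n × Fin n) : Fin n → ℤ := fun i =>
  if i = p.1 ∧ ((Finset.univ.erase p.1).filter (fun m => x m = x p.2)).card >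
      ((Finset.univ.erase p.1).filter (fun m => x m = x p.1)).card
  then x p.2 else x i

def Y (x : Fin n → ℤ) (s : ℕ → Fin n × Fin n) : ℕ → Fin n → ℤ
  | 0 => x
  | t + 1 => step (Y x s t) (s t)

def Cons (x : Fin n → ℤ) : Prop := ∀ i j, x i = x j
def PM (x : Fin n → ℤ) : Prop := ∀ i, x i = 1 ∨ x i = -1

def cnt (x : Fin n → ℤ) (v : ℤ) : ℕ := (Finset.univ.filter (fun i => x i = v)).card
def phi (x : Fin n → ℤ) : ℕ := min (cnt x 1) (cnt x (-1))

lemma step_mem (x : Fin n → ℤ) (p : Fin n × Fin n) (i : Fin n) :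
    step x p i = x p.2 ∨ step x p i = x i := by
  unfold step; split_ifs <;> simp

lemma step_pm {x : Fin n → ℤ} (hx : PM x) (p : Fin n × Fin n) : PM (step x p) := by
  intro i
  rcases step_mem x p i with h | h <;> rw [h] <;> [exact hx p.2; exact hx i]

lemma step_cons {x : Fin n → ℤ} (hx : Cons x) (p : Fin n × Fin n) : Cons (step x p) := by
  intro i j
  rcases step_mem x p i with h | h <;> rcases step_mem x p j with h' | h' <;>
    rw [h, h'] <;> exact hx _ _

lemma phi_le (x : Fin n → ℤ) : phi x ≤ n := by
  calc phi x ≤ cnt x 1 := min_le_left _ _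
    _ ≤ Finset.univ.card := Finset.card_filter_le _ _
    _ = n := Finset.card_fin n

lemma cnt_zero_all {x : Fin n → ℤ} (hx : PM x) (h : cnt x 1 = 0) : ∀ i, x i = -1 := by
  intro i
  unfold cnt at h
  rcases hx i with h1 | h1
  · exfalso
    have : i ∈ Finset.univ.filter (fun i => x i = 1) := by simp [h1]
    have := Finset.card_pos.mpr ⟨i, this⟩
    omega
  · exact h1

lemma cnt_zero_all' {x : Fin n → ℤ} (hx : PM x) (h : cnt x (-1) = 0) : ∀ i, x i = 1 := by
  intro i
  unfold cnt at h
  rcases hx i with h1 | h1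
  · exact h1
  · exfalso
    have : i ∈ Finset.univ.filter (fun i => x i = -1) := by simp [h1]
    have := Finset.card_pos.mpr ⟨i, this⟩
    omega

lemma cons_of_phi_zero {x : Fin n → ℤ} (hx : PM x) (h : phi x = 0) : Cons x := by
  unfold phi at h
  rcases Nat.min_eq_zero_iff.mp h with h | h
  · intro i j; rw [cnt_zero_all hx h i, cnt_zero_all hx h j]
  · intro i j; rw [cnt_zero_all' hx h i, cnt_zero_all' hx h j]

lemma phi_step_zero {x : Fin n → ℤ} (hx : PM x) (h : phi x = 0) (p : Fin n × Fin n) :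
    phi (step x p) = 0 := by
  unfold phi at h ⊢
  rcases Nat.min_eq_zero_iff.mp h with h | h
  · have : cnt (step x p) 1 = 0 := by
      unfold cnt
      rw [Finset.card_eq_zero, Finset.filter_eq_empty_iff]
      intro i _
      rcases step_mem x p i with h' | h' <;> rw [h']
      · rw [cnt_zero_all hx h p.2]; decide
      · rw [cnt_zero_all hx h i]; decide
    omega
  · have : cnt (step x p) (-1) = 0 := by
      unfold cnt
      rw [Finset.card_eq_zero, Finset.filter_eq_empty_iff]
      intro i _
      rcases step_mem x p i with h' | h' <;> rw [h']
      · rw [cnt_zero_all' hx h p.2]; decide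
      · rw [cnt_zero_all' hx h i]; decide
    omega

lemma improve_gen (x : Fin n → ℤ) (a b : ℤ) (hne : a ≠ b)
    (hx : ∀ i, x i = a ∨ x i = b) (h1 : 0 < cnt x a) (h2 : cnt x a ≤ cnt x b) :
    ∃ p : Fin n × Fin n, p.1 ≠ p.2 ∧ cnt (step x p) a + 1 = cnt x a ∧
      cnt (step x p) b = cnt x b + 1 := by
  obtain ⟨v, hv⟩ := Finset.card_pos.mp h1
  rw [Finset.mem_filter] at hv
  have hvb : 0 < cnt x b := lt_of_lt_of_le h1 h2
  obtain ⟨w, hw⟩ := Finset.card_pos.mp hvb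
  rw [Finset.mem_filter] at hw
  have hxv : x v = a := hv.2
  have hxw : x w = b := hw.2
  have hvw : v ≠ w := fun h => hne (by rw [← hxv, h, hxw])
  refine ⟨(v, w), hvw, ?_⟩
  have hA : (Finset.univ.erase v).filter (fun m => x m = b) =
      Finset.univ.filter (fun m => x m = b) := by
    ext m
    simp only [Finset.mem_filter, Finset.mem_erase, Finset.mem_univ, true_and, and_true]
    constructor
    · exact fun h => h.2
    · intro h; exact ⟨fun hmv => hne (by rw [← hxv, ← hmv, h]), h⟩
  have hB : (Finset.univ.erase v).filter (fun m => x m = a) =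
      (Finset.univ.filter (fun m => x m = a)).erase v := by
    ext m
    simp only [Finset.mem_filter, Finset.mem_erase, Finset.mem_univ, true_and, and_true]
  have hBcard : ((Finset.univ.erase v).filter (fun m => x m = a)).card = cnt x a - 1 := by
    rw [hB, Finset.card_erase_of_mem (by simp [hxv])]; rfl
  have hcond : ((Finset.univ.erase v).filter (fun m => x m = x w)).card >
      ((Finset.univ.erase v).filter (fun m => x m = x v)).card := by
    rw [hxv, hxw, hA, hBcard]
    show cnt x b > cnt x a - 1
    omega
  have hstep_v : step x (v, w) v = b := by
    unfold step
    rw [if_pos ⟨rfl, hcond⟩]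
    exact hxw
  have hstep_ne : ∀ i, i ≠ v → step x (v, w) i = x i := by
    intro i hi
    unfold step
    rw [if_neg (fun h => hi h.1)]
  have hca : Finset.univ.filter (fun i => step x (v, w) i = a) =
      (Finset.univ.filter (fun i => x i = a)).erase v := by
    ext i
    simp only [Finset.mem_filter, Finset.mem_erase, Finset.mem_univ, true_and]
    constructor
    · intro h
      have hiv : i ≠ v := by
        intro he; subst he; rw [hstep_v] at h; exact hne h.symm
      exact ⟨hiv, by rw [← hstep_ne i hiv]; exact h⟩
    · intro ⟨hiv, h⟩; rw [hstep_ne i hiv]; exact h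
  have hcb : Finset.univ.filter (fun i => step x (v, w) i = b) =
      insert v (Finset.univ.filter (fun i => x i = b)) := by
    ext i
    simp only [Finset.mem_filter, Finset.mem_insert, Finset.mem_univ, true_and]
    constructor
    · intro h
      by_cases hiv : i = v
      · exact Or.inl hiv
      · exact Or.inr (by rw [← hstep_ne i hiv]; exact h)
    · intro h
      rcases h with h | h
      · subst h; exact hstep_v
      · have hiv : i ≠ v := by
          intro he; subst he; rw [hxv] at h; exact hne h
        rw [hstep_ne i hiv]; exact h
  constructor
  · show cnt (step x (v,w)) a + 1 = cnt x a
    unfold cnt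
    rw [hca, Finset.card_erase_of_mem (by simp [hxv])]
    have : 0 < (Finset.univ.filter (fun i => x i = a)).card := h1
    omega
  · show cnt (step x (v,w)) b = cnt x b + 1
    unfold cnt
    rw [hcb, Finset.card_insert_of_notMem (by simp [hxv, hne])]

lemma improve {x : Fin n → ℤ} (hx : PM x) (h : 1 ≤ phi x) :
    ∃ p : Fin n × Fin n, p.1 ≠ p.2 ∧ phi (step x p) + 1 ≤ phi x := by
  have h1 : 0 < cnt x 1 := lt_of_lt_of_le h (min_le_left _ _)
  have h2 : 0 < cnt x (-1) := lt_of_lt_of_le h (min_le_right _ _)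
  by_cases hc : cnt x 1 ≤ cnt x (-1)
  · obtain ⟨p, hp, e1, e2⟩ := improve_gen x 1 (-1) (by decide) hx h1 hc
    exact ⟨p, hp, by unfold phi; omega⟩
  · obtain ⟨p, hp, e1, e2⟩ := improve_gen x (-1) 1 (by decide)
      (fun i => (hx i).symm) h2 (by omega)
    exact ⟨p, hp, by unfold phi; omega⟩

noncomputable def choose1 (x : Fin n → ℤ) (d : Fin n × Fin n) : Fin n × Fin n :=
  if h : ∃ p : Fin n × Fin n, p.1 ≠ p.2 ∧ phi (step x p) + 1 ≤ phi x then h.choose else d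

lemma choose1_ne {x : Fin n → ℤ} {d : Fin n × Fin n} (hd : d.1 ≠ d.2) :
    (choose1 x d).1 ≠ (choose1 x d).2 := by
  unfold choose1
  split_ifs with h
  · exact h.choose_spec.1
  · exact hd

noncomputable def W (x : Fin n → ℤ) (d : Fin n × Fin n) : ℕ → Fin n → ℤ
  | 0 => x
  | r + 1 => step (W x d r) (choose1 (W x d r) d)

lemma W_pm {x : Fin n → ℤ} (hx : PM x) (d : Fin n × Fin n) (r : ℕ) : PM (W x d r) := by
  induction r with
  | zero => exact hx
  | succ r ih => exact step_pm ih _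

lemma W_phi {x : Fin n → ℤ} (hx : PM x) (d : Fin n × Fin n) (r : ℕ) :
    phi (W x d r) = 0 ∨ phi (W x d r) + r ≤ phi x := by
  induction r with
  | zero => right; simp [W]
  | succ r ih =>
    by_cases h0 : phi (W x d r) = 0
    · left
      exact phi_step_zero (W_pm hx d r) h0 _
    · have himp := improve (W_pm hx d r) (by omega)
      have : phi (W x d (r+1)) + 1 ≤ phi (W x d r) := by
        show phi (step (W x d r) (choose1 (W x d r) d)) + 1 ≤ _
        unfold choose1
        rw [dif_pos himp]
        exact himp.choose_spec.2
      rcases ih with h | h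
      · omega
      · right; omega

lemma W_cons {x : Fin n → ℤ} (hx : PM x) (d : Fin n × Fin n) : Cons (W x d n) := by
  rcases W_phi hx d n with h | h
  · exact cons_of_phi_zero (W_pm hx d n) h
  · have := phi_le x
    exact cons_of_phi_zero (W_pm hx d n) (by omega)

lemma Y_congr (x : Fin n → ℤ) {s s' : ℕ → Fin n × Fin n} (t : ℕ)
    (h : ∀ i < t, s i = s' i) : Y x s t = Y x s' t := by
  induction t with
  | zero => rfl
  | succ t ih =>
    show step (Y x s t) (s t) = step (Y x s' t) (s' t)
    rw [ih (fun i hi => h i (by omega)), h t (by omega)]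

lemma Y_add (x : Fin n → ℤ) (s : ℕ → Fin n × Fin n) (a b : ℕ) :
    Y x s (a + b) = Y (Y x s a) (fun r => s (a + r)) b := by
  induction b with
  | zero => rfl
  | succ b ih =>
    show Y x s (a + b + 1) = step (Y (Y x s a) _ b) _
    rw [show a + b + 1 = (a+b) + 1 from rfl]
    show step (Y x s (a + b)) (s (a + b)) = _
    rw [ih]

lemma Y_eq_W (x : Fin n → ℤ) (s : ℕ → Fin n × Fin n) (d : Fin n × Fin n) (t : ℕ)
    (h : ∀ r < t, s r = choose1 (W x d r) d) : Y x s t = W x d t := by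
  induction t with
  | zero => rfl
  | succ t ih =>
    show step (Y x s t) (s t) = step (W x d t) (choose1 (W x d t) d)
    rw [ih (fun r hr => h r (by omega)), h t (by omega)]

lemma Y_pm {x : Fin n → ℤ} (hx : PM x) (s : ℕ → Fin n × Fin n) (t : ℕ) : PM (Y x s t) := by
  induction t with
  | zero => exact hx
  | succ t ih => exact step_pm ih _

lemma Y_cons_mono {x : Fin n → ℤ} {s : ℕ → Fin n × Fin n} {T t : ℕ}
    (h : Cons (Y x s T)) (ht : T ≤ t) : Cons (Y x s t) := by
  induction t with
  | zero => exact (Nat.le_zero.mp ht) ▸ h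
  | succ t ih =>
    rcases Nat.lt_or_ge T (t+1) with h' | h'
    · exact step_cons (ih (by omega)) _
    · exact (Nat.le_antisymm ht h') ▸ h

def bcfg (b : Fin n → Bool) : Fin n → ℤ := fun i => if b i then 1 else -1

lemma bcfg_pm (b : Fin n → Bool) : PM (bcfg b) := by
  intro i; unfold bcfg; split_ifs <;> simp

lemma bcfg_inj : Function.Injective (bcfg (n := n)) := by
  intro b b' h
  funext i
  have := congrFun h i
  unfold bcfg at this
  by_cases hb : b i <;> by_cases hb' : b' i <;> simp [hb, hb'] at this ⊢

lemma pm_eq_bcfg {x : Fin n → ℤ} (hx : PM x) :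
    x = bcfg (fun i => decide (x i = 1)) := by
  funext i
  unfold bcfg
  rcases hx i with h | h <;> simp [h]



lemma main (hn : 2 ≤ n) {Ω : Type*} [MeasureSpace Ω] [IsProbabilityMeasure (ℙ : Measure Ω)]
    (sel : ℕ → Ω → Fin n × Fin n) (hselmeas : ∀ t, Measurable (sel t))
    (hselindep : iIndepFun sel ℙ)
    (c0 : ENNReal) (hc0 : c0 ≠ 0) (hc1 : c0 ≤ 1)
    (hprob : ∀ t (p : Fin n × Fin n), p.1 ≠ p.2 → (ℙ {ω | sel t ω = p} : ENNReal) = c0)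
    (x0 : Fin n → ℤ) (hx0 : PM x0) :
    ∀ᵐ ω ∂ℙ, ∃ T, ∀ t, T ≤ t → Cons (Y x0 (fun s => sel s ω) t) := by
  classical
  set pd : Fin n × Fin n := (⟨0, by omega⟩, ⟨1, by omega⟩) with hpd_def
  have hpd : pd.1 ≠ pd.2 := by
    simp only [hpd_def, ne_eq, Fin.mk.injEq]
    omega
  set c : ENNReal := c0 ^ n with hc_def
  have hcne : c ≠ 0 := pow_ne_zero _ hc0
  have hcle : c ≤ 1 := pow_le_one' hc1 n
  have hmeas_ev : ∀ (i : ℕ) (q : Fin n × Fin n), MeasurableSet {ω | sel i ω = q} :=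
    fun i q => hselmeas i (measurableSet_singleton q)
  have hprod : ∀ (S : Finset ℕ) (q : ℕ → Fin n × Fin n),
      ℙ (⋂ i ∈ S, {ω | sel i ω = q i}) = ∏ i ∈ S, ℙ {ω | sel i ω = q i} := by
    intro S q
    exact hselindep.meas_biInter (fun i _ => ⟨{q i}, measurableSet_singleton _, rfl⟩)
  -- block success events
  set bs : (Fin n → Bool) → ℕ → Fin n × Fin n :=
    fun b r => choose1 (W (bcfg b) pd r) pd with hbs_def
  set B : ℕ → (Fin n → Bool) → Set Ω :=
    fun m b => ⋂ i ∈ Finset.Ico (n*m) (n*m+n), {ω | sel i ω = bs b (i - n*m)} with hB_def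
  set D : ℕ → (Fin n → Bool) → Set Ω :=
    fun m b => {ω | Y x0 (fun s => sel s ω) (n*m) = bcfg b} with hD_def
  have hBmeas : ∀ m b, MeasurableSet (B m b) := by
    intro m b
    exact Finset.measurableSet_biInter _ (fun i _ => hmeas_ev i _)
  have hBprob : ∀ m b, ℙ (B m b) = c := by
    intro m b
    rw [hB_def]
    rw [hprod]
    rw [Finset.prod_congr rfl (fun i hi => hprob i _ (choose1_ne hpd))]
    rw [Finset.prod_const, Nat.card_Ico]
    congr 1
    omega
  -- cylinder decomposition of D
  set ext : ∀ T : ℕ, (Fin T → Fin n × Fin n) → ℕ → Fin n × Fin n :=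
    fun T p i => if h : i < T then p ⟨i, h⟩ else pd with hext_def
  set Cyl : ∀ T : ℕ, (Fin T → Fin n × Fin n) → Set Ω :=
    fun T p => ⋂ i ∈ Finset.range T, {ω | sel i ω = ext T p i} with hCyl_def
  have hCylmeas : ∀ T p, MeasurableSet (Cyl T p) := by
    intro T p
    exact Finset.measurableSet_biInter _ (fun i _ => hmeas_ev i _)
  have hCylmem : ∀ T p ω, ω ∈ Cyl T p ↔ ∀ i : Fin T, sel i ω = p i := by
    intro T p ω
    simp only [hCyl_def, Set.mem_iInter, Finset.mem_range, Set.mem_setOf_eq]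
    constructor
    · intro h i
      simpa only [hext_def, dif_pos i.2, Fin.eta] using h i.1 i.2
    · intro h i hi
      simp only [hext_def, dif_pos hi]
      exact h ⟨i, hi⟩
  have hCyldisj : ∀ T (p p' : Fin T → Fin n × Fin n), p ≠ p' →
      Disjoint (Cyl T p) (Cyl T p') := by
    intro T p p' hne
    rw [Set.disjoint_left]
    intro ω h1 h2
    exact hne (funext fun i => by rw [← (hCylmem T p ω).mp h1 i, (hCylmem T p' ω).mp h2 i])
  have hDeq : ∀ m b, D m b = ⋃ p ∈ Finset.univ.filter
      (fun p : Fin (n*m) → Fin n × Fin n => Y x0 (ext (n*m) p) (n*m) = bcfg b),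
      Cyl (n*m) p := by
    intro m b
    ext ω
    simp only [hD_def, Set.mem_setOf_eq, Set.mem_iUnion, Finset.mem_filter, Finset.mem_univ,
      true_and, exists_prop]
    constructor
    · intro h
      refine ⟨fun i => sel i ω, ?_, ?_⟩
      · rw [← h]
        apply Y_congr
        intro i hi
        simp only [hext_def, dif_pos hi]
      · exact (hCylmem _ _ ω).mpr (fun i => rfl)
    · rintro ⟨p, hgood, hmem⟩
      rw [← hgood]
      apply Y_congr
      intro i hi
      simp only [hext_def, dif_pos hi]
      exact (hCylmem _ p ω).mp hmem ⟨i, hi⟩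
  have hDmeas : ∀ m b, MeasurableSet (D m b) := by
    intro m b
    rw [hDeq]
    exact (Finset.measurableSet_biUnion _ (fun p _ => hCylmeas _ p))
  -- probability of cylinder ∩ block
  have hCB : ∀ m b (p : Fin (n*m) → Fin n × Fin n),
      ℙ (Cyl (n*m) p ∩ B m b) = ℙ (Cyl (n*m) p) * c := by
    intro m b p
    set qq : ℕ → Fin n × Fin n :=
      fun i => if i < n*m then ext (n*m) p i else bs b (i - n*m) with hqq_def
    have hset : Cyl (n*m) p ∩ B m b = ⋂ i ∈ Finset.range (n*m + n), {ω | sel i ω = qq i} := by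
      ext ω
      simp only [Set.mem_inter_iff, hCyl_def, hB_def, Set.mem_iInter, Finset.mem_range,
        Finset.mem_Ico, Set.mem_setOf_eq]
      constructor
      · rintro ⟨h1, h2⟩ i hi
        rw [hqq_def]
        by_cases hlt : i < n*m
        · simp only [if_pos hlt]
          exact h1 i hlt
        · simp only [if_neg hlt]
          exact h2 i ⟨by omega, by omega⟩
      · intro h
        constructor
        · intro i hi
          have := h i (by omega)
          simpa only [hqq_def, if_pos hi] using this
        · intro i hi
          have := h i (by omega)
          simpa only [hqq_def, if_neg (show ¬ i < n * m by omega)] using this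
    rw [hset, hprod, Finset.prod_range_add]
    congr 1
    · rw [hCyl_def, hprod]
      apply Finset.prod_congr rfl
      intro i hi
      rw [Finset.mem_range] at hi
      simp only [hqq_def, if_pos hi]
    · have hfac : ∀ i ∈ Finset.range n, ℙ {ω | sel (n*m + i) ω = qq (n*m + i)} = c0 := by
        intro i hi
        rw [Finset.mem_range] at hi
        have hq : qq (n*m + i) = bs b i := by
          simp only [hqq_def, if_neg (show ¬ (n*m + i < n*m) by omega)]
          congr 1
          omega
        rw [hq]
        exact hprob _ _ (choose1_ne hpd)
      rw [Finset.prod_congr rfl hfac, Finset.prod_const, Finset.card_range, hc_def]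
  have hDB : ∀ m b, ℙ (D m b ∩ B m b) = ℙ (D m b) * c := by
    intro m b
    rw [hDeq]
    rw [Set.iUnion₂_inter]
    rw [measure_biUnion_finset ?hd ?hm, measure_biUnion_finset ?hd2 ?hm2]
    case hd =>
      intro p _ p' _ hne
      exact Set.disjoint_of_subset Set.inter_subset_left Set.inter_subset_left
        (hCyldisj _ p p' hne)
    case hm => exact fun p _ => (hCylmeas _ p).inter (hBmeas m b)
    case hd2 => exact fun p _ p' _ hne => hCyldisj _ p p' hne
    case hm2 => exact fun p _ => hCylmeas _ p
    rw [Finset.sum_mul]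
    exact Finset.sum_congr rfl (fun p _ => hCB m b p)
  -- the induction
  have hbad : ∀ m, ℙ {ω | ¬ Cons (Y x0 (fun s => sel s ω) (n*m))} ≤ (1 - c) ^ m := by
    intro m
    induction m with
    | zero => simpa using prob_le_one
    | succ m ih =>
      set badB : Finset (Fin n → Bool) := Finset.univ.filter (fun b => ¬ Cons (bcfg b))
        with hbadB_def
      have hsub : {ω | ¬ Cons (Y x0 (fun s => sel s ω) (n*(m+1)))} ⊆
          ⋃ b ∈ badB, (D m b \ B m b) := by
        intro ω hω
        simp only [Set.mem_setOf_eq] at hω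
        set y : Fin n → ℤ := Y x0 (fun s => sel s ω) (n*m) with hy_def
        have hy_pm : PM y := Y_pm hx0 _ _
        set b : Fin n → Bool := fun i => decide (y i = 1) with hb_def
        have hby : bcfg b = y := (pm_eq_bcfg hy_pm).symm
        have hmul : n * m ≤ n * (m+1) := Nat.mul_le_mul_left n (by omega)
        have hnotcons : ¬ Cons y := by
          intro hcons
          exact hω (Y_cons_mono (x := x0) (s := fun s => sel s ω) (hy_def ▸ hcons) hmul)
        simp only [Set.mem_iUnion, exists_prop]
        refine ⟨b, ?_, ?_, ?_⟩
        · rw [hbadB_def]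
          simp only [Finset.mem_filter, Finset.mem_univ, true_and]
          rw [hby]
          exact hnotcons
        · rw [hD_def]
          exact hby.symm
        · intro hωB
          apply hω
          have hsplit : n * (m+1) = n * m + n := by ring
          rw [hsplit, Y_add]
          have hmatch : ∀ r < n, sel (n*m + r) ω = choose1 (W y pd r) pd := by
            intro r hr
            have hmem : (n*m + r) ∈ Finset.Ico (n*m) (n*m + n) := by
              rw [Finset.mem_Ico]; omega
            have := Set.mem_iInter₂.mp hωB (n*m + r) hmem
            simp only [Set.mem_setOf_eq] at this
            rw [this, hbs_def]
            simp only [Nat.add_sub_cancel_left]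
            rw [hby]
          rw [← hy_def, Y_eq_W y (fun r => sel (n*m + r) ω) pd n hmatch]
          exact W_cons hy_pm pd
      calc ℙ {ω | ¬ Cons (Y x0 (fun s => sel s ω) (n*(m+1)))}
          ≤ ℙ (⋃ b ∈ badB, (D m b \ B m b)) := measure_mono hsub
        _ ≤ ∑ b ∈ badB, ℙ (D m b \ B m b) := measure_biUnion_finset_le _ _
        _ ≤ ∑ b ∈ badB, ℙ (D m b) * (1 - c) := by
            apply Finset.sum_le_sum
            intro b _
            have hdiff : ℙ (D m b \ B m b) = ℙ (D m b) - ℙ (D m b ∩ B m b) := by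
              rw [← Set.diff_self_inter]
              exact measure_diff Set.inter_subset_left
                (((hDmeas m b).inter (hBmeas m b)).nullMeasurableSet)
                (measure_ne_top _ _)
            rw [hdiff, hDB]
            rw [tsub_le_iff_right]
            apply le_of_eq
            calc ℙ (D m b) = ℙ (D m b) * 1 := (mul_one _).symm
              _ = ℙ (D m b) * ((1 - c) + c) := by rw [tsub_add_cancel_of_le hcle]
              _ = ℙ (D m b) * (1 - c) + ℙ (D m b) * c := by rw [mul_add]
        _ = (∑ b ∈ badB, ℙ (D m b)) * (1 - c) := by rw [Finset.sum_mul]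
        _ = ℙ (⋃ b ∈ badB, D m b) * (1 - c) := by
            congr 1
            refine (measure_biUnion_finset ?_ ?_).symm
            · intro b _ b' _ hne
              show Disjoint (D m b) (D m b')
              rw [Set.disjoint_left]
              intro ω h1 h2
              simp only [hD_def, Set.mem_setOf_eq] at h1 h2
              exact hne (bcfg_inj (h1.symm.trans h2))
            · exact fun b _ => hDmeas m b
        _ ≤ ℙ {ω | ¬ Cons (Y x0 (fun s => sel s ω) (n*m))} * (1 - c) := by
            apply mul_le_mul_left
            apply measure_mono
            intro ω hω
            simp only [Set.mem_iUnion, exists_prop] at hω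
            obtain ⟨b, hb, hωb⟩ := hω
            rw [hbadB_def] at hb
            simp only [Finset.mem_filter, Finset.mem_univ, true_and] at hb
            rw [hD_def] at hωb
            simp only [Set.mem_setOf_eq] at hωb ⊢
            rw [hωb]
            exact hb
        _ ≤ (1 - c) ^ m * (1 - c) := mul_le_mul_left ih _
        _ = (1 - c) ^ (m + 1) := (pow_succ _ _).symm
  -- conclusion
  have hzero : ℙ (⋂ m, {ω | ¬ Cons (Y x0 (fun s => sel s ω) (n*m))}) = 0 := by
    have hlt : (1 : ENNReal) - c < 1 := ENNReal.sub_lt_self ENNReal.one_ne_top one_ne_zero hcne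
    have htend := ENNReal.tendsto_pow_atTop_nhds_zero_of_lt_one hlt
    refine le_antisymm (ge_of_tendsto' htend (fun m => ?_)) zero_le
    exact le_trans (measure_mono (Set.iInter_subset _ m)) (hbad m)
  rw [ae_iff]
  apply measure_mono_null _ hzero
  intro ω hω
  simp only [Set.mem_setOf_eq, not_exists] at hω
  simp only [Set.mem_iInter, Set.mem_setOf_eq]
  intro m hcons
  exact hω (n*m) (fun t ht => Y_cons_mono hcons ht)

end Stmt13

theorem stmt13 {n : ℕ} (G : SimpleGraph (Fin n)) [DecidableRel G.Adj]
    (hG : G = (⊤ : SimpleGraph (Fin n)))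
    {Ω : Type*} [MeasureSpace Ω] [IsProbabilityMeasure (ℙ : Measure Ω)]
    (X : ℕ → Ω → Fin n → ℤ) (sel : ℕ → Ω → Fin n × Fin n)
    (hpm : ∀ ω i, X 0 ω i = 1 ∨ X 0 ω i = -1)
    -- at each step, a uniformly random vertex and a uniformly random neighbor of it
    -- are selected, independently over time
    (hselmeas : ∀ t, Measurable (sel t))
    (hselindep : iIndepFun sel ℙ)
    (hadj : ∀ t ω, G.Adj (sel t ω).1 (sel t ω).2)
    (hunif : ∀ t (v w : Fin n), G.Adj v w →
      (ℙ {ω | sel t ω = (v, w)} : ENNReal)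
        = ENNReal.ofReal (1 / (n * G.degree v)))
    -- majority-imitation update rule
    (hupd : ∀ t ω i, X (t + 1) ω i =
      if i = (sel t ω).1 ∧
          ((G.neighborFinset (sel t ω).1).filter
              (fun m => X t ω m = X t ω (sel t ω).2)).card >
            ((G.neighborFinset (sel t ω).1).filter
              (fun m => X t ω m = X t ω (sel t ω).1)).card
        then X t ω (sel t ω).2 else X t ω i) :
    ∀ᵐ ω ∂ℙ, ∃ T, ∀ t, T ≤ t → ∀ i j : Fin n, X t ω i = X t ω j := by
  rcases Nat.lt_or_ge n 2 with hn | hn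
  · refine ae_of_all _ (fun ω => ⟨0, fun t _ i j => ?_⟩)
    have : i = j := Fin.ext (by have := i.isLt; have := j.isLt; omega)
    rw [this]
  · subst hG
    have hnb : ∀ v : Fin n, (⊤ : SimpleGraph (Fin n)).neighborFinset v
        = Finset.univ.erase v := by
      intro v; ext w
      simp [SimpleGraph.mem_neighborFinset, Finset.mem_erase, ne_comm]
    have hXY : ∀ ω t, X t ω = Stmt13.Y (X 0 ω) (fun s => sel s ω) t := by
      intro ω t
      induction t with
      | zero => rfl
      | succ t ih =>
        funext i
        rw [hupd]
        show _ = Stmt13.step (Stmt13.Y (X 0 ω) (fun s => sel s ω) t) (sel t ω) i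
        rw [← ih, Stmt13.step, hnb]
    have hdeg : ∀ v : Fin n, (⊤ : SimpleGraph (Fin n)).degree v = n - 1 := by
      intro v
      rw [← SimpleGraph.card_neighborFinset_eq_degree, hnb v,
        Finset.card_erase_of_mem (Finset.mem_univ v), Finset.card_univ, Fintype.card_fin]
    set c0 : ENNReal := ENNReal.ofReal (1 / (n * ((n - 1 : ℕ) : ℝ))) with hc0_def
    have hn1 : (1:ℝ) ≤ ((n - 1 : ℕ) : ℝ) := by
      have : 1 ≤ n - 1 := by omega
      exact_mod_cast this
    have hn2 : (2:ℝ) ≤ (n : ℝ) := by exact_mod_cast hn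
    have hc0 : c0 ≠ 0 := by
      rw [hc0_def]
      refine ne_of_gt (ENNReal.ofReal_pos.mpr ?_)
      apply div_pos one_pos
      nlinarith
    have hc1 : c0 ≤ 1 := by
      rw [hc0_def]
      apply ENNReal.ofReal_le_one.mpr
      rw [div_le_one (by nlinarith)]
      nlinarith
    have hprob : ∀ t (p : Fin n × Fin n), p.1 ≠ p.2 →
        (ℙ {ω | sel t ω = p} : ENNReal) = c0 := by
      intro t p hne
      have h := hunif t p.1 p.2 (by simpa using hne)
      rw [hdeg] at h
      exact h
    have key : ∀ᵐ ω ∂ℙ, ∀ b : Fin n → Bool, ∃ T, ∀ t, T ≤ t →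
        Stmt13.Cons (Stmt13.Y (Stmt13.bcfg b) (fun s => sel s ω) t) := by
      rw [MeasureTheory.ae_all_iff]
      intro b
      exact Stmt13.main hn sel hselmeas hselindep c0 hc0 hc1 hprob _ (Stmt13.bcfg_pm b)
    filter_upwards [key] with ω hω
    have hx0 : Stmt13.PM (X 0 ω) := fun i => hpm ω i
    obtain ⟨T, hT⟩ := hω (fun i => decide (X 0 ω i = 1))
    refine ⟨T, fun t ht i j => ?_⟩
    have hc := hT t ht
    rw [← Stmt13.pm_eq_bcfg hx0] at hc
    rw [hXY ω t]
    exact hc i j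
end

section
/- In the majority-imitation model, a single update step changes Z by an even nonpositive integer when the update rule is followed: if vertex k imitates neighbor j (so strictly more of k's neighbors hold x_j(t) than x_k(t)), then Z_t − Z_{t+1} ≥ 2; if k does not change, Z_t = Z_{t+1}. -/
open Finset

lemma term_max_eq {n : ℕ} (G : SimpleGraph (Fin n)) [DecidableRel G.Adj]
    (x : Fin n → ℤ) (i m : Fin n) :
    max (if x i ≠ x m then 1 else 0) (if i ≠ m ∧ ¬ G.Adj i m then 1 else 0)
      = (if i ≠ m ∧ ¬ G.Adj i m then 1 else 0)
        + (if G.Adj i m ∧ x i ≠ x m then 1 else 0) := by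
  by_cases h1 : G.Adj i m
  · simp [h1]
  · by_cases h2 : i = m
    · subst h2; simp
    · simp only [h1, h2, not_false_iff, and_true, true_and, if_true, false_and, if_false]
      split <;> simp

lemma Zval_eq {n : ℕ} (G : SimpleGraph (Fin n)) [DecidableRel G.Adj] (x : Fin n → ℤ) :
    Zval G x = (∑ i : Fin n, ∑ m : Fin n, if i ≠ m ∧ ¬ G.Adj i m then 1 else 0)
      + ∑ i : Fin n, ∑ m : Fin n, (if G.Adj i m ∧ x i ≠ x m then 1 else 0) := by
  unfold Zval
  rw [← Finset.sum_add_distrib]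
  refine Finset.sum_congr rfl fun i _ => ?_
  rw [← Finset.sum_add_distrib]
  exact Finset.sum_congr rfl fun m _ => term_max_eq G x i m

lemma pm_ne_iff {a b c : ℤ} (ha : a = 1 ∨ a = -1) (hb : b = 1 ∨ b = -1)
    (hc : c = 1 ∨ c = -1) (hbc : b ≠ c) : b ≠ a ↔ a = c := by
  rcases ha with h | h <;> rcases hb with h' | h' <;> rcases hc with h'' | h'' <;> simp_all

lemma key_diff {n : ℕ} (G : SimpleGraph (Fin n)) [DecidableRel G.Adj]
    (x : Fin n → ℤ) (hx : ∀ i, x i = 1 ∨ x i = -1) (k j : Fin n) (hkj : x k ≠ x j) :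
    (Zval G x : ℤ) - Zval G (fun i => if i = k then x j else x i)
      = 2 * (((((G.neighborFinset k).filter (fun m => x m = x j)).card : ℤ))
          - (((G.neighborFinset k).filter (fun m => x m = x k)).card : ℤ)) := by
  set x' : Fin n → ℤ := fun i => if i = k then x j else x i with hx'
  have hx'k : x' k = x j := by simp [hx']
  have hx'ne : ∀ i, i ≠ k → x' i = x i := fun i hi => by simp [hx', hi]
  -- cards as sums
  have cardA : ((((G.neighborFinset k).filter (fun m => x m = x j)).card : ℤ))
      = ∑ m : Fin n, (if G.Adj k m ∧ x m = x j then (1 : ℤ) else 0) := by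
    rw [SimpleGraph.neighborFinset_eq_filter, Finset.filter_filter, Finset.card_filter]
    push_cast
    rfl
  have cardB : ((((G.neighborFinset k).filter (fun m => x m = x k)).card : ℤ))
      = ∑ m : Fin n, (if G.Adj k m ∧ x m = x k then (1 : ℤ) else 0) := by
    rw [SimpleGraph.neighborFinset_eq_filter, Finset.filter_filter, Finset.card_filter]
    push_cast
    rfl
  -- per-pair difference function
  set d : Fin n → ℤ := fun m =>
    (if G.Adj k m ∧ x m = x j then (1 : ℤ) else 0)
      - (if G.Adj k m ∧ x m = x k then (1 : ℤ) else 0) with hd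
  set h : Fin n → Fin n → ℤ := fun i m =>
    (if G.Adj i m ∧ x i ≠ x m then (1 : ℤ) else 0)
      - (if G.Adj i m ∧ x' i ≠ x' m then (1 : ℤ) else 0) with hh
  have hzero : ∀ i m : Fin n, i ≠ k → m ≠ k → h i m = 0 := by
    intro i m hi hm
    simp only [hh, hx'ne i hi, hx'ne m hm, sub_self]
  have hcol : ∀ i : Fin n, h i k = d i := by
    intro i
    by_cases hi : i = k
    · subst hi; simp [hh, hd, G.irrefl]
    · simp only [hh, hd, hx'ne i hi, hx'k]
      have e1 : (G.Adj i k ∧ x i ≠ x k) ↔ (G.Adj k i ∧ x i = x j) := by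
        rw [G.adj_comm]
        exact and_congr_right fun _ => by
          rw [ne_comm]; exact pm_ne_iff (hx i) (hx k) (hx j) hkj
      have e2 : (G.Adj i k ∧ x i ≠ x j) ↔ (G.Adj k i ∧ x i = x k) := by
        rw [G.adj_comm]
        exact and_congr_right fun _ => by
          rw [ne_comm]; exact pm_ne_iff (hx i) (hx j) (hx k) (Ne.symm hkj)
      rw [if_congr e1 rfl rfl, if_congr e2 rfl rfl]
  have hrow : ∀ m : Fin n, h k m = d m := by
    intro m
    by_cases hm : m = k
    · subst hm; simp [hh, hd, G.irrefl]
    · simp only [hh, hd, hx'ne m hm, hx'k]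
      have e1 : (G.Adj k m ∧ x k ≠ x m) ↔ (G.Adj k m ∧ x m = x j) :=
        and_congr_right fun _ => pm_ne_iff (hx m) (hx k) (hx j) hkj
      have e2 : (G.Adj k m ∧ x j ≠ x m) ↔ (G.Adj k m ∧ x m = x k) :=
        and_congr_right fun _ => pm_ne_iff (hx m) (hx j) (hx k) (Ne.symm hkj)
      rw [if_congr e1 rfl rfl, if_congr e2 rfl rfl]
  have hdk : d k = 0 := by simp [hd, G.irrefl]
  have hsum : (∑ i : Fin n, ∑ m : Fin n, h i m) = 2 * ∑ m : Fin n, d m := by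
    rw [← Finset.sum_erase_add Finset.univ _ (Finset.mem_univ k)]
    have h1 : (∑ i ∈ Finset.univ.erase k, ∑ m : Fin n, h i m)
        = ∑ i ∈ Finset.univ.erase k, d i := by
      refine Finset.sum_congr rfl fun i hi => ?_
      have hik : i ≠ k := Finset.ne_of_mem_erase hi
      rw [Finset.sum_eq_single_of_mem k (Finset.mem_univ k)
        (fun m _ hm => hzero i m hik hm)]
      exact hcol i
    have h2 : (∑ m : Fin n, h k m) = ∑ m : Fin n, d m :=
      Finset.sum_congr rfl fun m _ => hrow m
    have h3 : (∑ i ∈ Finset.univ.erase k, d i) + d k = ∑ m : Fin n, d m :=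
      Finset.sum_erase_add Finset.univ _ (Finset.mem_univ k)
    rw [h1, h2]
    linarith
  have hS : (∑ i : Fin n, ∑ m : Fin n, (if G.Adj i m ∧ x i ≠ x m then (1 : ℤ) else 0))
      - (∑ i : Fin n, ∑ m : Fin n, (if G.Adj i m ∧ x' i ≠ x' m then (1 : ℤ) else 0))
      = 2 * ∑ m : Fin n, d m := by
    rw [← Finset.sum_sub_distrib]
    rw [← hsum]
    exact Finset.sum_congr rfl fun i _ => (Finset.sum_sub_distrib _ _).symm
  rw [Zval_eq G x, Zval_eq G x', cardA, cardB]
  push_cast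
  rw [← Finset.sum_sub_distrib]
  simp only [hd] at hS ⊢
  linarith [hS]

theorem stmt15 {n : ℕ} (G : SimpleGraph (Fin n)) [DecidableRel G.Adj]
    (x x' : Fin n → ℤ) (hx : ∀ i, x i = 1 ∨ x i = -1)
    (k j : Fin n) (hadj : G.Adj k j)
    (hupd : ∀ i, x' i =
      if i = k ∧
          ((G.neighborFinset k).filter (fun m => x m = x j)).card >
            ((G.neighborFinset k).filter (fun m => x m = x k)).card
        then x j else x i) :
    Zval G x' ≤ Zval G x ∧ (2 : ℤ) ∣ ((Zval G x : ℤ) - Zval G x') ∧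
    (((G.neighborFinset k).filter (fun m => x m = x j)).card >
        ((G.neighborFinset k).filter (fun m => x m = x k)).card →
      Zval G x' + 2 ≤ Zval G x) ∧
    (¬ (((G.neighborFinset k).filter (fun m => x m = x j)).card >
        ((G.neighborFinset k).filter (fun m => x m = x k)).card) →
      Zval G x' = Zval G x) := by
  by_cases hP : ((G.neighborFinset k).filter (fun m => x m = x j)).card >
      ((G.neighborFinset k).filter (fun m => x m = x k)).card
  · have hkj : x k ≠ x j := by
      intro h
      have : ((G.neighborFinset k).filter (fun m => x m = x j))
          = ((G.neighborFinset k).filter (fun m => x m = x k)) :=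
        Finset.filter_congr fun m _ => by rw [h]
      rw [this] at hP
      exact lt_irrefl _ hP
    have hxx' : x' = fun i => if i = k then x j else x i := by
      funext i
      rw [hupd i]
      by_cases h : i = k <;> simp [h, hP]
    have key := key_diff G x hx k j hkj
    rw [← hxx'] at key
    have hd : ((((G.neighborFinset k).filter (fun m => x m = x j)).card : ℤ))
        - (((G.neighborFinset k).filter (fun m => x m = x k)).card : ℤ) ≥ 1 := by
      omega
    refine ⟨?_, ?_, fun _ => ?_, fun h => absurd hP h⟩
    · have : (Zval G x' : ℤ) ≤ Zval G x := by omega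
      exact_mod_cast this
    · exact ⟨_, key⟩
    · have : (Zval G x' : ℤ) + 2 ≤ Zval G x := by omega
      exact_mod_cast this
  · have hxx' : x' = x := by
      funext i
      rw [hupd i]
      simp [hP]
    rw [hxx']
    exact ⟨le_refl _, by simp, fun h => absurd h hP, fun _ => rfl⟩
end
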